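/- Let ν > 0, η > 0, M ≥ 0, let s ∈ ℂ with Re s > η, and let f : [0,∞) → ℂ be continuous with |f(y)| ≤ M e^{−ηy} for all y ≥ 0. Define v(y) = −(1/(2sν)) ∫_y^∞ f(τ) e^{s(y−τ)} dτ − (1/(2sν)) ∫_0^y f(τ) e^{−s(y−τ)} dτ + (1/(2sν)) ∫_0^∞ f(τ) e^{−s(y+τ)} dτ. Then for all y ≥ 0 one has |v(y)| e^{ηy} ≤ 3M / (2ν |s| (Re s − η)). -/

import Mathlib

open MeasureTheory Set

lemma exp_int_Ioi (c a : ℝ) (hc : 0 < c) :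
    ∫ x in Ioi a, Real.exp (-c * x) = Real.exp (-c * a) / c := by
  simp only [neg_mul]
  rw [integral_comp_mul_left_Ioi (fun x => Real.exp (-x)) a hc]
  simp [integral_exp_neg_Ioi, integral_exp_Iic, smul_eq_mul, div_eq_inv_mul]

lemma exp_int_interval (c a b : ℝ) (hc : c ≠ 0) :
    ∫ x in a..b, Real.exp (c * x) = (Real.exp (c * b) - Real.exp (c * a)) / c := by
  have h : ∀ x ∈ Set.uIcc a b, HasDerivAt (fun x => Real.exp (c * x) / c) (Real.exp (c * x)) x := by
    intro x _
    have : HasDerivAt (fun x => Real.exp (c * x)) (Real.exp (c * x) * c) x :=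
      (Real.hasDerivAt_exp (c*x)).comp x ((hasDerivAt_id x).const_mul c) |>.congr_deriv (by ring)
    simpa [mul_div_assoc, mul_div_cancel_right₀ _ hc] using this.div_const c
  rw [intervalIntegral.integral_eq_sub_of_hasDerivAt h
    ((Real.continuous_exp.comp (continuous_const.mul continuous_id)).continuousOn.intervalIntegrable)]
  ring

/-- Weighted estimate for the explicit Dirichlet resolvent of `ν d²/dy²` on the half line:
if `|f(y)| ≤ M e^{-ηy}` and `Re s > η`, then `|v(y)| e^{ηy} ≤ 3M/(2ν|s|(Re s - η))`. -/
theorem stmt_2 (ν η M : ℝ) (hν : 0 < ν) (hη : 0 < η) (hM : 0 ≤ M)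
    (s : ℂ) (hs : η < s.re)
    (f : ℝ → ℂ) (hf_cont : ContinuousOn f (Ici 0))
    (hf : ∀ y ∈ Ici (0:ℝ), ‖f y‖ ≤ M * Real.exp (-η * y))
    (v : ℝ → ℂ)
    (hv : ∀ y : ℝ, v y =
      -(1 / (2 * s * ν)) * (∫ τ in Ioi y, f τ * Complex.exp (s * ((y : ℂ) - (τ : ℂ))))
      - (1 / (2 * s * ν)) * (∫ τ in (0:ℝ)..y, f τ * Complex.exp (-s * ((y : ℂ) - (τ : ℂ))))
      + (1 / (2 * s * ν)) * ∫ τ in Ioi (0:ℝ), f τ * Complex.exp (-s * ((y : ℂ) + (τ : ℂ)))) :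
    ∀ y ∈ Ici (0:ℝ),
      ‖v y‖ * Real.exp (η * y) ≤
        3 * M / (2 * ν * ‖s‖ * (s.re - η)) := by
  intro y hy
  have hy0 : (0:ℝ) ≤ y := hy
  have hsne : s ≠ 0 := fun h => by rw [h] at hs; simp at hs; linarith
  set a : ℝ := s.re with ha
  have haη : η < a := hs
  have ha0 : 0 < a := hη.trans haη
  have habs : 0 < ‖s‖ := norm_pos_iff.mpr hsne
  have hap : 0 < a + η := by linarith
  have ham : 0 < a - η := by linarith
  set C : ℝ := 1 / (2 * ‖s‖ * ν) with hC
  have hCabs : ‖(1 / (2 * s * (ν:ℂ)))‖ = C := by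
    simp [map_div₀, map_mul, Complex.norm_real, abs_of_pos hν,
      hC]
  have hC0 : 0 ≤ C := by positivity
  -- Bound 1 : integral over Ioi y
  have B1 : ‖∫ τ in Ioi y, f τ * Complex.exp (s * ((y : ℂ) - (τ : ℂ)))‖ ≤
      M / (a + η) * Real.exp (-η * y) := by
    have hgint : Integrable (fun τ => M * Real.exp (a * y) * Real.exp (-(a + η) * τ))
        (volume.restrict (Ioi y)) :=
      ((exp_neg_integrableOn_Ioi y hap).const_mul (M * Real.exp (a * y)))
    have hb : ∀ᵐ τ ∂(volume.restrict (Ioi y)),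
        ‖f τ * Complex.exp (s * ((y : ℂ) - (τ : ℂ)))‖ ≤
          M * Real.exp (a * y) * Real.exp (-(a + η) * τ) := by
      refine (ae_restrict_iff' measurableSet_Ioi).2 (Filter.Eventually.of_forall fun τ hτ => ?_)
      have hτ0 : (0:ℝ) ≤ τ := le_of_lt (lt_of_le_of_lt hy0 hτ)
      have hre : (s * ((y : ℂ) - (τ : ℂ))).re = a * (y - τ) := by
        simp [Complex.mul_re, ha]
      calc ‖f τ * Complex.exp (s * ((y : ℂ) - (τ : ℂ)))‖
          = ‖f τ‖ * Real.exp (a * (y - τ)) := by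
            simp only [norm_mul, Complex.norm_exp]; rw [hre]
        _ ≤ (M * Real.exp (-η * τ)) * Real.exp (a * (y - τ)) :=
            mul_le_mul_of_nonneg_right (hf τ hτ0) (Real.exp_pos _).le
        _ = M * Real.exp (a * y) * Real.exp (-(a + η) * τ) := by
            rw [mul_assoc, mul_assoc, ← Real.exp_add, ← Real.exp_add]
            congr 2; ring
    refine (norm_integral_le_of_norm_le hgint hb).trans (le_of_eq ?_)
    rw [integral_const_mul, exp_int_Ioi _ _ hap]
    have e : Real.exp (a * y) * Real.exp (-(a + η) * y) = Real.exp (-η * y) := by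
      rw [← Real.exp_add]; congr 1; ring
    rw [show M * Real.exp (a * y) * (Real.exp (-(a + η) * y) / (a + η))
        = M / (a + η) * (Real.exp (a * y) * Real.exp (-(a + η) * y)) by ring, e]
  -- Bound 2 : interval integral
  have B2 : ‖∫ τ in (0:ℝ)..y, f τ * Complex.exp (-s * ((y : ℂ) - (τ : ℂ)))‖ ≤
      M / (a - η) * Real.exp (-η * y) := by
    have hb : ∀ᵐ τ ∂(volume.restrict (Set.uIoc (0:ℝ) y)),
        ‖f τ * Complex.exp (-s * ((y : ℂ) - (τ : ℂ)))‖ ≤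
          M * Real.exp (-(a * y)) * Real.exp ((a - η) * τ) := by
      refine (ae_restrict_iff' measurableSet_uIoc).2 (Filter.Eventually.of_forall fun τ hτ => ?_)
      rw [uIoc_of_le hy0] at hτ
      have hτ0 : (0:ℝ) ≤ τ := hτ.1.le
      have hre : (-s * ((y : ℂ) - (τ : ℂ))).re = -(a * (y - τ)) := by
        simp [Complex.mul_re, ha]
      calc ‖f τ * Complex.exp (-s * ((y : ℂ) - (τ : ℂ)))‖
          = ‖f τ‖ * Real.exp (-(a * (y - τ))) := by
            simp only [norm_mul, Complex.norm_exp]; rw [hre]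
        _ ≤ (M * Real.exp (-η * τ)) * Real.exp (-(a * (y - τ))) :=
            mul_le_mul_of_nonneg_right (hf τ hτ0) (Real.exp_pos _).le
        _ = M * Real.exp (-(a * y)) * Real.exp ((a - η) * τ) := by
            rw [mul_assoc, mul_assoc, ← Real.exp_add, ← Real.exp_add]
            congr 2; ring
    have hgint : IntervalIntegrable (fun τ => M * Real.exp (-(a * y)) * Real.exp ((a - η) * τ))
        volume 0 y :=
      (Continuous.intervalIntegrable (by continuity) 0 y)
    refine (intervalIntegral.norm_integral_le_abs_of_norm_le hb hgint).trans ?_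
    rw [intervalIntegral.integral_const_mul, exp_int_interval _ _ _ (ne_of_gt ham)]
    have hexple : Real.exp ((a - η) * 0) ≤ Real.exp ((a - η) * y) := by
      apply Real.exp_le_exp.2; nlinarith
    have hnn : 0 ≤ M * Real.exp (-(a * y)) *
        ((Real.exp ((a - η) * y) - Real.exp ((a - η) * 0)) / (a - η)) :=
      mul_nonneg (mul_nonneg hM (Real.exp_pos _).le)
        (div_nonneg (by linarith) ham.le)
    rw [abs_of_nonneg hnn]
    have e1 : Real.exp (-(a * y)) * Real.exp ((a - η) * y) = Real.exp (-η * y) := by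
      rw [← Real.exp_add]; congr 1; ring
    calc M * Real.exp (-(a*y)) * ((Real.exp ((a - η) * y) - Real.exp ((a - η) * 0)) / (a - η))
        ≤ M * Real.exp (-(a*y)) * (Real.exp ((a - η) * y) / (a - η)) := by
          gcongr
          nlinarith [Real.exp_pos ((a - η) * 0)]
      _ = M / (a - η) * Real.exp (-η * y) := by
          rw [show M * Real.exp (-(a*y)) * (Real.exp ((a - η) * y) / (a - η))
              = M / (a - η) * (Real.exp (-(a*y)) * Real.exp ((a - η) * y)) by ring, e1]
  -- Bound 3 : integral over Ioi 0
  have B3 : ‖∫ τ in Ioi (0:ℝ), f τ * Complex.exp (-s * ((y : ℂ) + (τ : ℂ)))‖ ≤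
      M / (a + η) * Real.exp (-η * y) := by
    have hgint : Integrable (fun τ => M * Real.exp (-(a * y)) * Real.exp (-(a + η) * τ))
        (volume.restrict (Ioi (0:ℝ))) :=
      ((exp_neg_integrableOn_Ioi 0 hap).const_mul (M * Real.exp (-(a * y))))
    have hb : ∀ᵐ τ ∂(volume.restrict (Ioi (0:ℝ))),
        ‖f τ * Complex.exp (-s * ((y : ℂ) + (τ : ℂ)))‖ ≤
          M * Real.exp (-(a * y)) * Real.exp (-(a + η) * τ) := by
      refine (ae_restrict_iff' measurableSet_Ioi).2 (Filter.Eventually.of_forall fun τ hτ => ?_)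
      have hτ0 : (0:ℝ) ≤ τ := le_of_lt hτ
      have hre : (-s * ((y : ℂ) + (τ : ℂ))).re = -(a * (y + τ)) := by
        simp [Complex.mul_re, ha]
      calc ‖f τ * Complex.exp (-s * ((y : ℂ) + (τ : ℂ)))‖
          = ‖f τ‖ * Real.exp (-(a * (y + τ))) := by
            simp only [norm_mul, Complex.norm_exp]; rw [hre]
        _ ≤ (M * Real.exp (-η * τ)) * Real.exp (-(a * (y + τ))) :=
            mul_le_mul_of_nonneg_right (hf τ hτ0) (Real.exp_pos _).le
        _ = M * Real.exp (-(a * y)) * Real.exp (-(a + η) * τ) := by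
            rw [mul_assoc, mul_assoc, ← Real.exp_add, ← Real.exp_add]
            congr 2; ring
    refine (norm_integral_le_of_norm_le hgint hb).trans ?_
    rw [integral_const_mul, exp_int_Ioi _ _ hap]
    have hle : Real.exp (-(a * y)) ≤ Real.exp (-η * y) := by
      apply Real.exp_le_exp.2; nlinarith
    calc M * Real.exp (-(a * y)) * (Real.exp (-(a + η) * 0) / (a + η))
        = M / (a + η) * Real.exp (-(a * y)) := by
          rw [mul_zero, Real.exp_zero]; ring
      _ ≤ M / (a + η) * Real.exp (-η * y) :=
          mul_le_mul_of_nonneg_left hle (by positivity)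
  -- assemble
  rw [show ‖v y‖ = ‖v y‖ from rfl]
  have hvbound : ‖v y‖ ≤
      C * ((M / (a + η) + M / (a - η) + M / (a + η)) * Real.exp (-η * y)) := by
    rw [hv y]
    set I1 := ∫ τ in Ioi y, f τ * Complex.exp (s * ((y : ℂ) - (τ : ℂ))) with hI1
    set I2 := ∫ τ in (0:ℝ)..y, f τ * Complex.exp (-s * ((y : ℂ) - (τ : ℂ))) with hI2
    set I3 := ∫ τ in Ioi (0:ℝ), f τ * Complex.exp (-s * ((y : ℂ) + (τ : ℂ))) with hI3
    set c : ℂ := 1 / (2 * s * (ν:ℂ)) with hc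
    have tri : ‖-c * I1 - c * I2 + c * I3‖ ≤ ‖c‖ * (‖I1‖ + ‖I2‖ + ‖I3‖) := by
      calc ‖-c * I1 - c * I2 + c * I3‖
          ≤ ‖-c * I1 - c * I2‖ + ‖c * I3‖ := norm_add_le _ _
        _ ≤ ‖-c * I1‖ + ‖c * I2‖ + ‖c * I3‖ := by
            gcongr ?_ + _; exact norm_sub_le _ _
        _ = ‖c‖ * (‖I1‖ + ‖I2‖ + ‖I3‖) := by
            simp only [norm_mul, norm_neg]; ring
    refine tri.trans ?_
    rw [hCabs]
    have hsum := add_le_add (add_le_add B1 B2) B3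
    calc C * (‖I1‖ + ‖I2‖ + ‖I3‖)
        ≤ C * (M / (a + η) * Real.exp (-η * y) + M / (a - η) * Real.exp (-η * y)
            + M / (a + η) * Real.exp (-η * y)) := mul_le_mul_of_nonneg_left hsum hC0
      _ = C * ((M / (a + η) + M / (a - η) + M / (a + η)) * Real.exp (-η * y)) := by ring
  have hexp : Real.exp (-η * y) * Real.exp (η * y) = 1 := by
    rw [← Real.exp_add, neg_mul, neg_add_cancel, Real.exp_zero]
  calc ‖v y‖ * Real.exp (η * y)
      ≤ C * ((M / (a + η) + M / (a - η) + M / (a + η)) * Real.exp (-η * y)) * Real.exp (η * y) :=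
        mul_le_mul_of_nonneg_right hvbound (Real.exp_pos _).le
    _ = C * (M / (a + η) + M / (a - η) + M / (a + η)) := by
        rw [mul_assoc, mul_assoc, hexp, mul_one]
    _ ≤ C * (M / (a - η) + M / (a - η) + M / (a - η)) := by
        have h1 : M / (a + η) ≤ M / (a - η) := by
          apply div_le_div_of_nonneg_left hM ham; linarith
        apply mul_le_mul_of_nonneg_left _ hC0; linarith
    _ = 3 * M / (2 * ν * ‖s‖ * (a - η)) := by
        rw [hC]; field_simp; ring
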